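/- Let G = (V₄ × ⟨b⟩) ⋉ (ℤ³), where V₄ = {1, d₁, d₂, d₃} is the Klein four-group, b has infinite order, and the action on generators a₁, a₂, a₃ of ℤ³ is: a_i^b = a_i⁻¹, a_i^{d_i} = a_i, a_i^{d_j} = a_i⁻¹ for i ≠ j. Then the subgroup K = ⟨a₁a₂a₃, b⟩ is isomorphic to the Klein bottle group ⟨a, b | a^b = a⁻¹⟩. -/

import Mathlib

/-- The single relator `b⁻¹ * a * b * a` of the Klein bottle group
`K = ⟨a, b ∣ b⁻¹ a b = a⁻¹⟩`, with generator `0 = a`, `1 = b`. -/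
def KleinRels : Set (FreeGroup (Fin 2)) :=
  {(FreeGroup.of 1)⁻¹ * FreeGroup.of 0 * FreeGroup.of 1 * FreeGroup.of 0}

/-- The Klein bottle group. -/
abbrev KleinGroup := PresentedGroup KleinRels

def aK : KleinGroup := PresentedGroup.of 0
def bK : KleinGroup := PresentedGroup.of 1


/-! The group `G = (V₄ × ⟨b⟩) ⋉ ℤ³` with `a_i^b = a_i⁻¹`, `a_i^{d_i} = a_i`,
`a_i^{d_j} = a_i⁻¹` for `i ≠ j`, where `V₄ = ZMod 2 × ZMod 2`,
`d₁ = (1,0)`, `d₂ = (0,1)`, `d₃ = (1,1)`. -/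

abbrev V4 := Multiplicative (ZMod 2 × ZMod 2)

/-- The top group `V₄ × ⟨b⟩`. -/
abbrev TopG := V4 × Multiplicative ℤ

/-- The base group `ℤ³` (written multiplicatively). -/
abbrev Z3 := Fin 3 → Multiplicative ℤ

/-- Sign associated to an element of `ZMod 2`. -/
def sgn : ZMod 2 → ℤˣ := fun c => if c = 0 then 1 else -1

/-- Exponent (mod 2) with which `(v, bᵐ)` inverts the generator `aᵢ`:
`a₁` is inverted by `d₂, d₃`, `a₂` by `d₁, d₃`, `a₃` by `d₁, d₂`, and every `aᵢ` by `b`. -/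
def sv : ZMod 2 × ZMod 2 → Fin 3 → ZMod 2 := fun v => ![v.2, v.1, v.1 + v.2]

/-- The sign with which `p = (v, bᵐ)` acts on `aᵢ`. -/
def expo : TopG → Fin 3 → ℤˣ :=
  fun p i => sgn ((Multiplicative.toAdd p.2 : ℤ) : ZMod 2) * sgn (sv (Multiplicative.toAdd p.1) i)

/-- The automorphism of `ℤ³` raising the `i`-th coordinate to the power `e i`. -/
def act (e : Fin 3 → ℤˣ) : MulAut Z3 where
  toFun f := fun i => f i ^ ((e i : ℤˣ) : ℤ)
  invFun f := fun i => f i ^ ((e i : ℤˣ) : ℤ)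
  left_inv f := by
    funext i
    show (f i ^ ((e i : ℤˣ) : ℤ)) ^ ((e i : ℤˣ) : ℤ) = f i
    rw [← zpow_mul, ← Units.val_mul, Int.units_mul_self, Units.val_one, zpow_one]
  right_inv f := by
    funext i
    show (f i ^ ((e i : ℤˣ) : ℤ)) ^ ((e i : ℤˣ) : ℤ) = f i
    rw [← zpow_mul, ← Units.val_mul, Int.units_mul_self, Units.val_one, zpow_one]
  map_mul' f g := by
    funext i
    exact mul_zpow _ _ _

/-- The action of `V₄ × ⟨b⟩` on `ℤ³`. -/
def phi : TopG →* MulAut Z3 :=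
  MonoidHom.mk' (fun p => act (expo p)) (by
    intro p q
    ext f i
    show f i ^ ((expo (p * q) i : ℤˣ) : ℤ) = (f i ^ ((expo q i : ℤˣ) : ℤ)) ^ ((expo p i : ℤˣ) : ℤ)
    rw [← zpow_mul, ← Units.val_mul]
    congr 2
    simp only [expo, sv, Prod.fst_mul, Prod.snd_mul, toAdd_mul, Int.cast_add, Prod.mk_mul_mk]
    have hsgn : ∀ c d : ZMod 2, sgn (c + d) = sgn c * sgn d := by decide
    fin_cases i <;> simp [sv, Prod.fst_add, Prod.snd_add, hsgn] <;> ac_rfl)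

/-- The group `G = (V₄ × ⟨b⟩) ⋉ ℤ³`. -/
abbrev Gex := SemidirectProduct Z3 TopG phi

/-- The generator `aᵢ` of the base `ℤ³`. -/
def agen (i : Fin 3) : Gex := SemidirectProduct.inl (Pi.mulSingle i (Multiplicative.ofAdd (1:ℤ)))

/-- The element `a = a₁a₂a₃`. -/
def aG : Gex := agen 0 * agen 1 * agen 2

/-- The element `b`. -/
def bG : Gex := SemidirectProduct.inr ((1 : V4), Multiplicative.ofAdd (1:ℤ))

/-- The elements `d₁, d₂, d₃` (indexed by the nonzero elements of `V₄`). -/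
def dG (v : V4) : Gex := SemidirectProduct.inr (v, 1)

/-! ### Auxiliary development -/

/-- The automorphism of `Multiplicative ℤ` raising to the power `e`. -/
def aut1 (e : ℤˣ) : MulAut (Multiplicative ℤ) where
  toFun x := x ^ ((e : ℤˣ) : ℤ)
  invFun x := x ^ ((e : ℤˣ) : ℤ)
  left_inv x := by
    show (x ^ ((e : ℤˣ) : ℤ)) ^ ((e : ℤˣ) : ℤ) = x
    rw [← zpow_mul, ← Units.val_mul, Int.units_mul_self, Units.val_one, zpow_one]
  right_inv x := by
    show (x ^ ((e : ℤˣ) : ℤ)) ^ ((e : ℤˣ) : ℤ) = x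
    rw [← zpow_mul, ← Units.val_mul, Int.units_mul_self, Units.val_one, zpow_one]
  map_mul' x y := mul_zpow _ _ _

/-- The inverting action of `ℤ` on `ℤ`. -/
def psiK : Multiplicative ℤ →* MulAut (Multiplicative ℤ) :=
  MonoidHom.mk' (fun n => aut1 ((-1) ^ (Multiplicative.toAdd n))) (by
    intro p q
    ext x
    show x ^ (((-1 : ℤˣ) ^ (Multiplicative.toAdd (p * q)) : ℤˣ) : ℤ)
        = (x ^ (((-1 : ℤˣ) ^ (Multiplicative.toAdd q) : ℤˣ) : ℤ))
            ^ (((-1 : ℤˣ) ^ (Multiplicative.toAdd p) : ℤˣ) : ℤ)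
    rw [← zpow_mul, ← Units.val_mul, toAdd_mul, zpow_add]
    congr 2
    exact mul_comm _ _)

/-- The model `ℤ ⋊ ℤ` for the Klein bottle group. -/
abbrev Hk := SemidirectProduct (Multiplicative ℤ) (Multiplicative ℤ) psiK

lemma conj_key {G : Type*} [Group G] {a b : G} (h : b * a * b⁻¹ = a⁻¹) :
    ∀ (n m : ℤ), b ^ n * a ^ m * (b ^ n)⁻¹ = a ^ ((((-1 : ℤˣ) ^ n : ℤˣ) : ℤ) * m) := by
  have hstep : ∀ k : ℤ, b * a ^ k * b⁻¹ = a ^ (-k) := by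
    intro k
    calc b * a ^ k * b⁻¹ = (b * a * b⁻¹) ^ k := by
          rw [conj_zpow]
      _ = a ^ (-k) := by rw [h, ← zpow_neg_one, ← zpow_mul, neg_one_mul]
  have hstep' : ∀ k : ℤ, b⁻¹ * a ^ k * b = a ^ (-k) := by
    intro k
    have := hstep (-k)
    rw [neg_neg] at this
    calc b⁻¹ * a ^ k * b = b⁻¹ * (b * a ^ (-k) * b⁻¹) * b := by rw [this]
      _ = a ^ (-k) := by group
  intro n
  induction n using Int.induction_on with
  | zero => intro m; simp
  | succ k ih =>
      intro m
      have : b ^ (k + 1 : ℤ) * a ^ m * (b ^ (k + 1 : ℤ))⁻¹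
          = b * (b ^ (k : ℤ) * a ^ m * (b ^ (k : ℤ))⁻¹) * b⁻¹ := by
        rw [zpow_add_one]
        group
      rw [this, ih, hstep]
      congr 1
      rw [zpow_add_one]
      push_cast [Units.val_mul]
      ring
  | pred k ih =>
      intro m
      have : b ^ (-k - 1 : ℤ) * a ^ m * (b ^ (-k - 1 : ℤ))⁻¹
          = b⁻¹ * (b ^ (-k : ℤ) * a ^ m * (b ^ (-k : ℤ))⁻¹) * b := by
        rw [zpow_sub_one]
        group
      rw [this, ih, hstep']
      congr 1
      rw [zpow_sub_one, show ((-1 : ℤˣ)⁻¹) = (-1 : ℤˣ) from rfl, Units.val_mul]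
      push_cast
      ring

/-- The key relation in the Klein bottle group. -/
lemma klein_rel : bK * aK * bK⁻¹ = aK⁻¹ := by
  have h1 : bK⁻¹ * aK * bK * aK = 1 := by
    have hmem : ((FreeGroup.of 1 : FreeGroup (Fin 2))⁻¹ * FreeGroup.of 0 * FreeGroup.of 1 *
        FreeGroup.of 0) ∈ Subgroup.normalClosure KleinRels :=
      Subgroup.subset_normalClosure rfl
    have : (QuotientGroup.mk ((FreeGroup.of 1 : FreeGroup (Fin 2))⁻¹ * FreeGroup.of 0 *
        FreeGroup.of 1 * FreeGroup.of 0) : PresentedGroup KleinRels) = 1 :=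
      (QuotientGroup.eq_one_iff _).2 hmem
    exact this
  have h2 : bK⁻¹ * aK * bK = aK⁻¹ := by
    calc bK⁻¹ * aK * bK = (bK⁻¹ * aK * bK * aK) * aK⁻¹ := by group
      _ = aK⁻¹ := by rw [h1]; group
  have h3 : bK * aK⁻¹ * bK⁻¹ = aK := by rw [← h2]; group
  calc bK * aK * bK⁻¹ = (bK * aK⁻¹ * bK⁻¹)⁻¹ := by group
    _ = aK⁻¹ := by rw [h3]


/-- The homomorphism from the model `Hk` to the Klein bottle group. -/
def toKlein : Hk →* KleinGroup :=
  SemidirectProduct.lift (zpowersHom KleinGroup aK) (zpowersHom KleinGroup bK) (by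
    intro g
    refine MonoidHom.ext_mint ?_
    show aK ^ (Multiplicative.toAdd ((psiK g) (Multiplicative.ofAdd (1:ℤ))))
        = (MulAut.conj (bK ^ Multiplicative.toAdd g))
            (aK ^ Multiplicative.toAdd (Multiplicative.ofAdd (1:ℤ)))
    rw [MulAut.conj_apply, conj_key klein_rel]
    congr 1)

/-- The homomorphism from the Klein bottle group to the model `Hk`. -/
def fromKlein : KleinGroup →* Hk :=
  PresentedGroup.toGroup (f := fun i : Fin 2 =>
    if i = 0 then (SemidirectProduct.inl (Multiplicative.ofAdd (1:ℤ)) : Hk)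
    else SemidirectProduct.inr (Multiplicative.ofAdd (1:ℤ))) (by
    intro r hr
    simp only [KleinRels, Set.mem_singleton_iff] at hr
    subst hr
    set A : Hk := SemidirectProduct.inl (Multiplicative.ofAdd (1:ℤ)) with hA
    set B : Hk := SemidirectProduct.inr (Multiplicative.ofAdd (1:ℤ)) with hB
    have hred : FreeGroup.lift (fun i : Fin 2 => if i = 0 then A else B)
        ((FreeGroup.of 1)⁻¹ * FreeGroup.of 0 * FreeGroup.of 1 * FreeGroup.of 0)
        = B⁻¹ * A * B * A := by
      simp only [map_mul, map_inv, FreeGroup.lift_apply_of]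
      norm_num
    rw [hred]
    have hBA : B⁻¹ * A * B
        = SemidirectProduct.inl ((psiK (Multiplicative.ofAdd (1:ℤ)))⁻¹
            (Multiplicative.ofAdd (1:ℤ))) := by
      rw [hA, hB, ← map_inv]
      exact (SemidirectProduct.inl_aut_inv _ _).symm
    rw [hBA, hA, ← map_mul]
    have : (psiK (Multiplicative.ofAdd (1:ℤ)))⁻¹ (Multiplicative.ofAdd (1:ℤ))
        * Multiplicative.ofAdd (1:ℤ) = 1 := by
      have hinv : (psiK (Multiplicative.ofAdd (1:ℤ)))⁻¹ = psiK (Multiplicative.ofAdd (-1:ℤ)) := by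
        rw [← map_inv]
        rfl
      rw [hinv]
      simp [psiK, aut1]
    rw [this, map_one])

/-- `Hk ≃* KleinGroup`. -/
def hkEquiv : Hk ≃* KleinGroup := by
  refine MonoidHom.toMulEquiv toKlein fromKlein ?_ ?_
  · apply SemidirectProduct.hom_ext
    · apply MonoidHom.ext_mint
      simp [toKlein, fromKlein, aK, PresentedGroup.toGroup.of]
    · apply MonoidHom.ext_mint
      simp [toKlein, fromKlein, bK, PresentedGroup.toGroup.of]
  · apply PresentedGroup.ext
    intro x
    fin_cases x <;>
      simp [toKlein, fromKlein, aK, bK, PresentedGroup.toGroup.of]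

/-- The vector of all ones in `ℤ³`. -/
def gvec : Z3 := fun _ => Multiplicative.ofAdd (1 : ℤ)

lemma aG_eq : aG = SemidirectProduct.inl gvec := by
  rw [aG, agen, agen, agen, ← map_mul, ← map_mul]
  congr 1
  funext i
  fin_cases i <;> rfl

lemma gex_rel : bG * aG * bG⁻¹ = aG⁻¹ := by
  have key : phi ((1 : V4), Multiplicative.ofAdd (1:ℤ)) gvec = gvec⁻¹ := by
    funext i
    show gvec i ^ ((expo ((1 : V4), Multiplicative.ofAdd (1:ℤ)) i : ℤˣ) : ℤ) = (gvec i)⁻¹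
    have h : expo ((1 : V4), Multiplicative.ofAdd (1:ℤ)) i = -1 := by
      fin_cases i <;> decide
    rw [h, show ((-1 : ℤˣ) : ℤ) = -1 from rfl, zpow_neg_one]
  rw [aG_eq, bG, ← map_inv, ← SemidirectProduct.inl_aut, key, map_inv]

/-- The homomorphism from the model `Hk` into `Gex`. -/
def toGex : Hk →* Gex :=
  SemidirectProduct.lift (zpowersHom Gex aG) (zpowersHom Gex bG) (by
    intro g
    refine MonoidHom.ext_mint ?_
    show aG ^ (Multiplicative.toAdd ((psiK g) (Multiplicative.ofAdd (1:ℤ))))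
        = (MulAut.conj (bG ^ Multiplicative.toAdd g))
            (aG ^ Multiplicative.toAdd (Multiplicative.ofAdd (1:ℤ)))
    rw [MulAut.conj_apply, conj_key gex_rel]
    congr 1)

lemma toGex_apply (p : Hk) :
    toGex p = SemidirectProduct.mk (gvec ^ (Multiplicative.toAdd p.left))
      ((1 : V4), p.right) := by
  show aG ^ (Multiplicative.toAdd p.left) * bG ^ (Multiplicative.toAdd p.right) = _
  rw [aG_eq, bG, ← map_zpow, ← map_zpow]
  have h2 : ((1 : V4), Multiplicative.ofAdd (1:ℤ)) ^ (Multiplicative.toAdd p.right)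
      = ((1 : V4), p.right) := by
    rw [Prod.pow_def]
    refine Prod.ext (one_zpow _) ?_
    show (Multiplicative.ofAdd (1:ℤ)) ^ (Multiplicative.toAdd p.right) = p.right
    rw [← ofAdd_zsmul, smul_eq_mul, mul_one, ofAdd_toAdd]
  rw [h2, ← SemidirectProduct.mk_eq_inl_mul_inr]

lemma toGex_injective : Function.Injective toGex := by
  intro p q hpq
  rw [toGex_apply, toGex_apply, SemidirectProduct.ext_iff] at hpq
  obtain ⟨h1, h2⟩ := hpq
  have hl : p.left = q.left := by
    have := congrFun h1 0
    simp only [Pi.pow_apply, gvec] at this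
    have : (Multiplicative.ofAdd (1:ℤ)) ^ (Multiplicative.toAdd p.left)
        = (Multiplicative.ofAdd (1:ℤ)) ^ (Multiplicative.toAdd q.left) := this
    rwa [← ofAdd_zsmul, ← ofAdd_zsmul, smul_eq_mul, smul_eq_mul, mul_one, mul_one,
      ofAdd_toAdd, ofAdd_toAdd] at this
  have hr : p.right = q.right := congrArg Prod.snd h2
  cases p; cases q
  simp_all

lemma toGex_range : toGex.range = Subgroup.closure {aG, bG} := by
  apply le_antisymm
  · rintro x ⟨p, rfl⟩
    have : toGex p = aG ^ (Multiplicative.toAdd p.left) * bG ^ (Multiplicative.toAdd p.right) :=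
      rfl
    rw [this]
    have haG : aG ∈ Subgroup.closure {aG, bG} :=
      Subgroup.subset_closure (Set.mem_insert _ _)
    have hbG : bG ∈ Subgroup.closure {aG, bG} :=
      Subgroup.subset_closure (Set.mem_insert_of_mem _ rfl)
    exact mul_mem (zpow_mem haG _) (zpow_mem hbG _)
  · rw [Subgroup.closure_le]
    rintro x (rfl | rfl)
    · exact ⟨SemidirectProduct.inl (Multiplicative.ofAdd 1), by
        show aG ^ (1:ℤ) * bG ^ (0:ℤ) = aG; simp⟩
    · exact ⟨SemidirectProduct.inr (Multiplicative.ofAdd 1), by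
        show aG ^ (0:ℤ) * bG ^ (1:ℤ) = bG; simp⟩

/-- The subgroup `K = ⟨a₁a₂a₃, b⟩` of `G = (V₄ × ⟨b⟩) ⋉ ℤ³` is isomorphic to the
Klein bottle group `⟨a, b ∣ aᵇ = a⁻¹⟩`. -/
theorem subgroup_iso_klein :
    Nonempty ((Subgroup.closure {aG, bG} : Subgroup Gex) ≃* KleinGroup) := by
  refine ⟨((MulEquiv.subgroupCongr toGex_range.symm).trans
    (MonoidHom.ofInjective toGex_injective).symm).trans hkEquiv⟩
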